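/- Let f : ℝ → ℝ satisfy f(t) = ∑_{j∈ℤ} f(jπ) sinc_F(t − jπ) with (f(jπ)) ∈ ℓ²(ℤ), where b ∈ ℓ¹(ℤ₊) and |sinc_F(s)| ≤ 2‖b‖_{ℓ¹}/|s| for all s ≠ 0. Define the adaptively truncated sum S_n(t) = ∑_{j : |t−jπ| ≤ nπ} f(jπ) sinc_F(t − jπ). Then for all t, |f(t) − S_n(t)|² ≤ 4‖b‖²_{ℓ¹} · (∑_{j∈ℤ} f(jπ)²) · (2/π²)(1/n² + 1/n). -/

import Mathlib

open Finset in
lemma aux_summable_shift (n : ℕ) : Summable (fun k : ℕ => (((n + k : ℕ) : ℝ) ^ 2)⁻¹) := by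
  have h : Summable (fun k : ℕ => 1 / ((k : ℝ)) ^ 2) :=
    Real.summable_one_div_nat_pow.mpr one_lt_two
  have := (summable_nat_add_iff n).mpr h
  refine this.congr fun k => ?_
  push_cast
  rw [add_comm (k:ℝ) n, one_div]

open Finset in
lemma aux_tail_sum (n : ℕ) (hn : 1 ≤ n) :
    ∑' k : ℕ, (((n + k : ℕ) : ℝ) ^ 2)⁻¹ ≤ 1 / (n : ℝ) ^ 2 + 1 / (n : ℝ) := by
  refine Summable.tsum_le_of_sum_le (aux_summable_shift n) fun F => ?_
  have hinj : Set.InjOn (fun k => n + k) F := fun a _ b _ h => by simpa using h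
  rw [← Finset.sum_image (f := fun i : ℕ => ((i : ℝ) ^ 2)⁻¹) hinj]
  have hsub : F.image (fun k => n + k) ⊆ Finset.Icc n (n + F.sup id) := by
    intro i hi
    simp only [Finset.mem_image] at hi
    obtain ⟨k, hk, rfl⟩ := hi
    exact Finset.mem_Icc.mpr ⟨Nat.le_add_right _ _, by
      have := Finset.le_sup (f := id) hk; simp only [id] at this; omega⟩
  refine le_trans (Finset.sum_le_sum_of_subset_of_nonneg hsub
    (fun i _ _ => by positivity)) ?_
  rw [Finset.Icc_eq_cons_Ioc (Nat.le_add_right _ _), Finset.sum_cons]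
  have h2 : (∑ i ∈ Finset.Ioc n (n + F.sup id), ((i : ℝ) ^ 2)⁻¹) ≤ (n : ℝ)⁻¹ - ((n + F.sup id : ℕ) : ℝ)⁻¹ :=
    sum_Ioc_inv_sq_le_sub (by omega) (Nat.le_add_right _ _)
  have hn' : (0:ℝ) < n := by exact_mod_cast hn
  have h3 : (0:ℝ) ≤ ((n + F.sup id : ℕ) : ℝ)⁻¹ := by positivity
  rw [one_div, one_div]
  linarith

set_option maxHeartbeats 1000000 in
theorem truncation_error_sq (b : ℕ → ℝ) (hb : Summable fun n => |b n|)
    (sincF : ℝ → ℝ)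
    (hdecay : ∀ s : ℝ, s ≠ 0 → |sincF s| ≤ 2 * (∑' n : ℕ, |b n|) / |s|)
    (f : ℝ → ℝ)
    (hsamp : Summable fun j : ℤ => (f (j * Real.pi)) ^ 2)
    (hf : ∀ t : ℝ, f t = ∑' j : ℤ, f (j * Real.pi) * sincF (t - j * Real.pi))
    (t : ℝ) (n : ℕ) (hn : 1 ≤ n) :
    (f t - ∑' j : {j : ℤ // |t - j * Real.pi| ≤ (n : ℝ) * Real.pi},
        f ((j : ℤ) * Real.pi) * sincF (t - (j : ℤ) * Real.pi)) ^ 2 ≤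
      4 * (∑' k : ℕ, |b k|) ^ 2 * (∑' j : ℤ, (f (j * Real.pi)) ^ 2) *
        (2 / Real.pi ^ 2 * (1 / (n : ℝ) ^ 2 + 1 / (n : ℝ))) := by
  set P := Real.pi with hPdef
  have hP : (0:ℝ) < P := Real.pi_pos
  set B := ∑' k : ℕ, |b k| with hBdef
  have hB : 0 ≤ B := tsum_nonneg fun k => abs_nonneg _
  set a : ℤ → ℝ := fun j => f (j * P) with hadef
  set c : ℤ → ℝ := fun j => sincF (t - j * P) with hcdef
  set m : ℤ := ⌊t / P⌋ with hmdef
  have hm1 : (m : ℝ) * P ≤ t := by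
    rw [← le_div_iff₀ hP]; exact Int.floor_le _
  have hm2 : t < ((m : ℝ) + 1) * P :=
    (div_lt_iff₀ hP).mp (Int.lt_floor_add_one (t / P))
  set Sset : Set ℤ := {j : ℤ | |t - (j : ℝ) * P| ≤ (n : ℝ) * P} with hSdef
  set q : ℤ → ℝ := fun j => ((t - (j : ℝ) * P) ^ 2)⁻¹ with hqdef
  set v : ℤ → ℝ := Set.indicator Ssetᶜ q with hvdef
  have hq0 : ∀ j, 0 ≤ q j := fun j => by positivity
  have hv0 : ∀ j, 0 ≤ v j := fun j => Set.indicator_nonneg (fun i _ => hq0 i) j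
  have hvq : v ≤ q := Set.indicator_le_self' fun j _ => hq0 j
  -- the two injections
  set eR : ℕ → ℤ := fun k => m + n + 1 + k with heRdef
  set eL : ℕ → ℤ := fun k => m - n - k with heLdef
  have heRinj : Function.Injective eR := fun x y h => by simp only [heRdef] at h; omega
  have heLinj : Function.Injective eL := fun x y h => by simp only [heLdef] at h; omega
  set wN : ℕ → ℝ := fun k => (((n + k : ℕ) : ℝ) ^ 2)⁻¹ * (P ^ 2)⁻¹ with hwdef
  have hshift : Summable (fun k : ℕ => (((n + k : ℕ) : ℝ) ^ 2)⁻¹) := by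
    have h : Summable (fun k : ℕ => 1 / ((k : ℝ)) ^ 2) :=
      Real.summable_one_div_nat_pow.mpr one_lt_two
    refine ((summable_nat_add_iff n).mpr h).congr fun k => ?_
    rw [one_div, Nat.add_comm k n]
  have hwsum : Summable wN := hshift.mul_right _
  -- distance bounds
  have hqR : ∀ k : ℕ, q (eR k) ≤ wN k := by
    intro k
    have h1 : t - ((eR k : ℤ) : ℝ) * P ≤ -(((n + k : ℕ) : ℝ) * P) := by
      have : ((eR k : ℤ) : ℝ) = (m : ℝ) + 1 + ((n + k : ℕ) : ℝ) := by
        simp only [heRdef]; push_cast; ring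
      rw [this]; push_cast; nlinarith
    have hpos : (0:ℝ) < ((n + k : ℕ) : ℝ) * P := by
      have : (1:ℝ) ≤ ((n + k : ℕ) : ℝ) := by exact_mod_cast Nat.le_add_right 1 k |>.trans (by omega)
      nlinarith
    have hsq : (((n + k : ℕ) : ℝ) * P) ^ 2 ≤ (t - ((eR k : ℤ) : ℝ) * P) ^ 2 := by nlinarith
    simp only [hqdef, hwdef]
    calc ((t - ((eR k : ℤ) : ℝ) * P) ^ 2)⁻¹ ≤ ((((n + k : ℕ) : ℝ) * P) ^ 2)⁻¹ := by
          apply inv_anti₀ (by positivity) hsq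
      _ = (((n + k : ℕ) : ℝ) ^ 2)⁻¹ * (P ^ 2)⁻¹ := by rw [mul_pow, mul_inv]
  have hqL : ∀ k : ℕ, q (eL k) ≤ wN k := by
    intro k
    have h1 : (((n + k : ℕ) : ℝ) * P) ≤ t - ((eL k : ℤ) : ℝ) * P := by
      have : ((eL k : ℤ) : ℝ) = (m : ℝ) - ((n + k : ℕ) : ℝ) := by
        simp only [heLdef]; push_cast; ring
      rw [this]; push_cast; nlinarith
    have hpos : (0:ℝ) < ((n + k : ℕ) : ℝ) * P := by
      have : (1:ℝ) ≤ ((n + k : ℕ) : ℝ) := by exact_mod_cast Nat.le_add_right 1 k |>.trans (by omega)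
      nlinarith
    have hsq : (((n + k : ℕ) : ℝ) * P) ^ 2 ≤ (t - ((eL k : ℤ) : ℝ) * P) ^ 2 := by nlinarith
    simp only [hqdef, hwdef]
    calc ((t - ((eL k : ℤ) : ℝ) * P) ^ 2)⁻¹ ≤ ((((n + k : ℕ) : ℝ) * P) ^ 2)⁻¹ := by
          apply inv_anti₀ (by positivity) hsq
      _ = (((n + k : ℕ) : ℝ) ^ 2)⁻¹ * (P ^ 2)⁻¹ := by rw [mul_pow, mul_inv]
  -- split v into right and left parts
  set vR : ℤ → ℝ := Set.indicator (Ssetᶜ ∩ {j : ℤ | t < (j : ℝ) * P}) q with hvRdef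
  set vL : ℤ → ℝ := Set.indicator (Ssetᶜ ∩ {j : ℤ | t < (j : ℝ) * P}ᶜ) q with hvLdef
  have hvsplit : v = vR + vL := by
    have hU : Ssetᶜ = (Ssetᶜ ∩ {j : ℤ | t < (j : ℝ) * P}) ∪ (Ssetᶜ ∩ {j : ℤ | t < (j : ℝ) * P}ᶜ) :=
      (Set.inter_union_compl _ _).symm
    have hdisj : Disjoint (Ssetᶜ ∩ {j : ℤ | t < (j : ℝ) * P}) (Ssetᶜ ∩ {j : ℤ | t < (j : ℝ) * P}ᶜ) :=
      Set.disjoint_of_subset Set.inter_subset_right Set.inter_subset_right disjoint_compl_right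
    rw [hvdef, hU, Set.indicator_union_of_disjoint hdisj]
    rfl
  -- support conditions
  have hsuppR : Function.support vR ⊆ Set.range eR := by
    intro j hj
    obtain ⟨hjc, hjt⟩ := Set.mem_of_indicator_ne_zero hj
    have hjc' : (n : ℝ) * P < |t - (j : ℝ) * P| := not_le.mp hjc
    have hjt' : t < (j : ℝ) * P := hjt
    have habs : |t - (j : ℝ) * P| = (j : ℝ) * P - t := by
      rw [abs_of_neg (by linarith)]; ring
    have hgt : ((m : ℝ) + (n : ℝ)) * P < (j : ℝ) * P := by nlinarith
    have hj2 : m + (n : ℤ) < j := by exact_mod_cast (mul_lt_mul_iff_left₀ hP).mp hgt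
    exact ⟨(j - (m + n + 1)).toNat, by simp only [heRdef]; omega⟩
  have hsuppL : Function.support vL ⊆ Set.range eL := by
    intro j hj
    obtain ⟨hjc, hjt⟩ := Set.mem_of_indicator_ne_zero hj
    have hjc' : (n : ℝ) * P < |t - (j : ℝ) * P| := not_le.mp hjc
    have hjt' : (j : ℝ) * P ≤ t := not_lt.mp hjt
    have habs : |t - (j : ℝ) * P| = t - (j : ℝ) * P := by
      rw [abs_of_nonneg (by linarith)]
    have hgt : (j : ℝ) * P < ((m : ℝ) + 1 - (n : ℝ)) * P := by nlinarith
    have hj2 : j < m + 1 - (n : ℤ) := by exact_mod_cast (mul_lt_mul_iff_left₀ hP).mp hgt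
    exact ⟨(m - n - j).toNat, by simp only [heLdef]; omega⟩
  have hvRcomp : Summable (vR ∘ eR) := by
    refine Summable.of_nonneg_of_le (fun k => Set.indicator_nonneg (fun i _ => hq0 i) _)
      (fun k => le_trans (Set.indicator_le_self' (fun i _ => hq0 i) (eR k)) (hqR k)) hwsum
  have hvLcomp : Summable (vL ∘ eL) := by
    refine Summable.of_nonneg_of_le (fun k => Set.indicator_nonneg (fun i _ => hq0 i) _)
      (fun k => le_trans (Set.indicator_le_self' (fun i _ => hq0 i) (eL k)) (hqL k)) hwsum
  have hvRzero : ∀ x ∉ Set.range eR, vR x = 0 := by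
    intro x hx; by_contra h; exact hx (hsuppR (Function.mem_support.mpr h))
  have hvLzero : ∀ x ∉ Set.range eL, vL x = 0 := by
    intro x hx; by_contra h; exact hx (hsuppL (Function.mem_support.mpr h))
  have hvRsum : Summable vR := (heRinj.summable_iff hvRzero).mp hvRcomp
  have hvLsum : Summable vL := (heLinj.summable_iff hvLzero).mp hvLcomp
  have hvRtsum : ∑' j : ℤ, vR j ≤ ∑' k : ℕ, wN k := by
    rw [← heRinj.tsum_eq hsuppR]
    exact Summable.tsum_le_tsum
      (fun k => le_trans (Set.indicator_le_self' (fun i _ => hq0 i) (eR k)) (hqR k))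
      hvRcomp hwsum
  have hvLtsum : ∑' j : ℤ, vL j ≤ ∑' k : ℕ, wN k := by
    rw [← heLinj.tsum_eq hsuppL]
    exact Summable.tsum_le_tsum
      (fun k => le_trans (Set.indicator_le_self' (fun i _ => hq0 i) (eL k)) (hqL k))
      hvLcomp hwsum
  have hvsum : Summable v := by rw [hvsplit]; exact hvRsum.add hvLsum
  have hwtsum : ∑' k : ℕ, wN k ≤ (1 / (n : ℝ) ^ 2 + 1 / (n : ℝ)) * (P ^ 2)⁻¹ := by
    rw [hwdef, tsum_mul_right]
    exact mul_le_mul_of_nonneg_right (aux_tail_sum n hn) (by positivity)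
  set D : ℝ := 2 / P ^ 2 * (1 / (n : ℝ) ^ 2 + 1 / (n : ℝ)) with hDdef
  have hD0 : 0 ≤ D := by
    have hn' : (0:ℝ) < n := by exact_mod_cast hn
    rw [hDdef]; positivity
  have hvD : ∑' j : ℤ, v j ≤ D := by
    have h1 : ∑' j : ℤ, v j = ∑' j : ℤ, vR j + ∑' j : ℤ, vL j := by
      rw [hvsplit]; exact Summable.tsum_add hvRsum hvLsum
    calc ∑' j : ℤ, v j = ∑' j : ℤ, vR j + ∑' j : ℤ, vL j := h1
      _ ≤ 2 * ∑' k : ℕ, wN k := by linarith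
      _ ≤ 2 * ((1 / (n : ℝ) ^ 2 + 1 / (n : ℝ)) * (P ^ 2)⁻¹) := by linarith
      _ = D := by rw [hDdef, div_eq_mul_inv]; ring
  -- subtype sums over the complement
  have hqCsum : Summable (fun j : ↥(Ssetᶜ) => q j) := by
    refine (hvsum.subtype Ssetᶜ).congr fun j => ?_
    exact Set.indicator_of_mem (s := Ssetᶜ) j.2 q
  have hqCtsum : ∑' j : ↥(Ssetᶜ), q j ≤ D := by
    have h1 : ∑' j : ↥(Ssetᶜ), q j = ∑' j : ↥(Ssetᶜ), v j :=
      tsum_congr fun j => (Set.indicator_of_mem j.2 q).symm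
    rw [h1, tsum_subtype]
    have h2 : Set.indicator Ssetᶜ v = v := by
      rw [hvdef, Set.indicator_indicator, Set.inter_self]
    rw [h2]
    exact hvD
  -- pointwise decay bound on the complement
  have hCabs : ∀ j : ℤ, j ∈ Ssetᶜ → (c j) ^ 2 ≤ 4 * B ^ 2 * q j := by
    intro j hj
    have hgt : (n : ℝ) * P < |t - (j : ℝ) * P| := not_le.mp hj
    have hpos : (0:ℝ) < |t - (j : ℝ) * P| := lt_of_le_of_lt (by positivity) hgt
    have hne : t - (j : ℝ) * P ≠ 0 := by
      intro h; rw [h] at hpos; simp at hpos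
    have hd := hdecay _ hne
    calc (c j) ^ 2 = |c j| ^ 2 := (sq_abs _).symm
      _ ≤ (2 * B / |t - (j : ℝ) * P|) ^ 2 := pow_le_pow_left₀ (abs_nonneg _) hd 2
      _ = 4 * B ^ 2 * q j := by
          rw [div_pow, sq_abs, hqdef, div_eq_mul_inv]; ring
  have haCsum : Summable (fun j : ↥(Ssetᶜ) => (a j) ^ 2) := hsamp.subtype _
  have hcCsum : Summable (fun j : ↥(Ssetᶜ) => (c j) ^ 2) :=
    Summable.of_nonneg_of_le (fun j => sq_nonneg _) (fun j => hCabs j j.2)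
      (hqCsum.mul_left _)
  have hgabs : ∀ j : ℤ, |a j * c j| ≤ ((a j) ^ 2 + (c j) ^ 2) / 2 := by
    intro j
    rw [abs_mul]
    nlinarith [sq_abs (a j), sq_abs (c j), sq_nonneg (|a j| - |c j|),
      abs_nonneg (a j), abs_nonneg (c j)]
  have hgCabs : Summable (fun j : ↥(Ssetᶜ) => |a j * c j|) :=
    Summable.of_nonneg_of_le (fun j => abs_nonneg _) (fun j => hgabs j)
      ((haCsum.add hcCsum).div_const 2)
  have hgCsum : Summable (fun j : ↥(Ssetᶜ) => a j * c j) := hgCabs.of_abs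
  -- finiteness of the window
  have hSfin : Sset.Finite := by
    apply Set.Finite.subset (Set.finite_Icc (m - n) (m + n + 1))
    intro j hj
    have h1 : |t - (j : ℝ) * P| ≤ (n : ℝ) * P := hj
    rw [abs_le] at h1
    have hr1 : (j : ℝ) < (m : ℝ) + 1 + n := by
      have h2 : (j : ℝ) * P < ((m : ℝ) + 1 + n) * P := by nlinarith [h1.1, h1.2]
      exact (mul_lt_mul_iff_left₀ hP).mp h2
    have hr2 : (m : ℝ) - n ≤ (j : ℝ) := by
      have h2 : ((m : ℝ) - n) * P ≤ (j : ℝ) * P := by nlinarith [h1.1, h1.2]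
      exact le_of_mul_le_mul_right h2 hP
    have hi1 : (m : ℤ) - n ≤ j := by exact_mod_cast hr2
    have hi2 : j < m + 1 + n := by exact_mod_cast hr1
    exact Set.mem_Icc.mpr ⟨hi1, by omega⟩
  haveI := hSfin.to_subtype
  have hgSsum : Summable (fun j : ↥Sset => a j * c j) := Summable.of_finite
  have hgsum : Summable (fun j : ℤ => a j * c j) :=
    summable_subtype_and_compl.mp ⟨hgSsum, hgCsum⟩
  -- splitting identity
  have h0 : (∑' j : {j : ℤ // |t - (j : ℤ) * P| ≤ (n : ℝ) * P},
      f ((j : ℤ) * P) * sincF (t - (j : ℤ) * P)) = ∑' j : ↥Sset, a j * c j := rfl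
  have h1 : f t = ∑' j : ℤ, a j * c j := hf t
  have hEt : f t - (∑' j : {j : ℤ // |t - (j : ℤ) * P| ≤ (n : ℝ) * P},
      f ((j : ℤ) * P) * sincF (t - (j : ℤ) * P)) = ∑' j : ↥(Ssetᶜ), a j * c j := by
    rw [h0, h1, ← hgsum.tsum_subtype_add_tsum_subtype_compl Sset]
    ring
  rw [hEt]
  -- Cauchy-Schwarz
  set AC : ℝ := ∑' j : ↥(Ssetᶜ), (a j) ^ 2 with hACdef
  set CC : ℝ := ∑' j : ↥(Ssetᶜ), (c j) ^ 2 with hCCdef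
  have hAC0 : 0 ≤ AC := tsum_nonneg fun _ => sq_nonneg _
  have hCC0 : 0 ≤ CC := tsum_nonneg fun _ => sq_nonneg _
  have hT : ∑' j : ↥(Ssetᶜ), |a j * c j| ≤ Real.sqrt AC * Real.sqrt CC := by
    refine Summable.tsum_le_of_sum_le hgCabs fun F => ?_
    have h1 : (∑ j ∈ F, |a j * c j|) ^ 2 ≤ (∑ j ∈ F, (a j) ^ 2) * (∑ j ∈ F, (c j) ^ 2) := by
      have h2 := Finset.sum_mul_sq_le_sq_mul_sq F (fun j => |a j|) (fun j => |c j|)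
      simp only [sq_abs, ← abs_mul] at h2
      exact h2
    have h3 : ∑ j ∈ F, |a j * c j| ≤
        Real.sqrt ((∑ j ∈ F, (a j) ^ 2) * (∑ j ∈ F, (c j) ^ 2)) :=
      (Real.le_sqrt (Finset.sum_nonneg fun j _ => abs_nonneg _)
        (mul_nonneg (Finset.sum_nonneg fun j _ => sq_nonneg _)
          (Finset.sum_nonneg fun j _ => sq_nonneg _))).mpr h1
    refine h3.trans ?_
    rw [Real.sqrt_mul (Finset.sum_nonneg fun j _ => sq_nonneg _)]
    have ha : ∑ j ∈ F, (a j) ^ 2 ≤ AC := Summable.sum_le_tsum F (fun j _ => sq_nonneg _) haCsum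
    have hc : ∑ j ∈ F, (c j) ^ 2 ≤ CC := Summable.sum_le_tsum F (fun j _ => sq_nonneg _) hcCsum
    exact mul_le_mul (Real.sqrt_le_sqrt ha) (Real.sqrt_le_sqrt hc)
      (Real.sqrt_nonneg _) (Real.sqrt_nonneg _)
  have hE2 : (∑' j : ↥(Ssetᶜ), a j * c j) ^ 2 ≤ AC * CC := by
    have habs : |∑' j : ↥(Ssetᶜ), a j * c j| ≤ ∑' j : ↥(Ssetᶜ), |a j * c j| := by
      have hnorm := norm_tsum_le_tsum_norm
        (f := fun j : ↥(Ssetᶜ) => a j * c j)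
        (by simp only [Real.norm_eq_abs]; exact hgCabs)
      simp only [Real.norm_eq_abs] at hnorm
      exact hnorm
    calc (∑' j : ↥(Ssetᶜ), a j * c j) ^ 2 = |∑' j : ↥(Ssetᶜ), a j * c j| ^ 2 := (sq_abs _).symm
      _ ≤ (∑' j : ↥(Ssetᶜ), |a j * c j|) ^ 2 := pow_le_pow_left₀ (abs_nonneg _) habs 2
      _ ≤ (Real.sqrt AC * Real.sqrt CC) ^ 2 :=
          pow_le_pow_left₀ (tsum_nonneg fun j => abs_nonneg _) hT 2
      _ = AC * CC := by rw [mul_pow, Real.sq_sqrt hAC0, Real.sq_sqrt hCC0]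
  have hACle : AC ≤ ∑' j : ℤ, (f ((j : ℤ) * P)) ^ 2 :=
    Summable.tsum_subtype_le (fun j : ℤ => (a j) ^ 2) _ (fun j => sq_nonneg _) hsamp
  have hCCle : CC ≤ 4 * B ^ 2 * D := by
    calc CC ≤ ∑' j : ↥(Ssetᶜ), 4 * B ^ 2 * q j :=
        Summable.tsum_le_tsum (fun j => hCabs j j.2) hcCsum (hqCsum.mul_left _)
      _ = 4 * B ^ 2 * ∑' j : ↥(Ssetᶜ), q j := tsum_mul_left
      _ ≤ 4 * B ^ 2 * D := mul_le_mul_of_nonneg_left hqCtsum (by positivity)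
  have hA0 : 0 ≤ ∑' j : ℤ, (f ((j : ℤ) * P)) ^ 2 := tsum_nonneg fun _ => sq_nonneg _
  calc (∑' j : ↥(Ssetᶜ), a j * c j) ^ 2 ≤ AC * CC := hE2
    _ ≤ (∑' j : ℤ, (f ((j : ℤ) * P)) ^ 2) * CC := mul_le_mul_of_nonneg_right hACle hCC0
    _ ≤ (∑' j : ℤ, (f ((j : ℤ) * P)) ^ 2) * (4 * B ^ 2 * D) :=
        mul_le_mul_of_nonneg_left hCCle hA0
    _ = 4 * B ^ 2 * (∑' j : ℤ, (f ((j : ℤ) * P)) ^ 2) * D := by ring
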